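/- If r is a maximal positive solution of r r'' = r² + 2(r')² + r²(r² + (r')²) on (a,b) with a critical point at θ₀ ∈ (a,b), then r is symmetric about θ₀: r(θ₀ + η) = r(θ₀ − η) for all admissible η, and consequently θ₀ = (a+b)/2. -/

import Mathlib

/-- `r` (with derivatives `r'`, `r''`) is a positive solution of the ODE
`r r'' = r² + 2 r'² + r² (r² + r'²)` on the open interval `(a,b)`. -/
def SolOn (r r' r'' : ℝ → ℝ) (a b : ℝ) : Prop :=
  ∀ θ ∈ Set.Ioo a b, 0 < r θ ∧ HasDerivAt r (r' θ) θ ∧ HasDerivAt r' (r'' θ) θ ∧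
    r θ * r'' θ = (r θ)^2 + 2 * (r' θ)^2 + (r θ)^2 * ((r θ)^2 + (r' θ)^2)

/-- The solution on `(a,b)` is maximal: it admits no extension to a strictly
larger open interval. -/
def MaximalSolOn (r r' r'' : ℝ → ℝ) (a b : ℝ) : Prop :=
  SolOn r r' r'' a b ∧
    ∀ (a' b' : ℝ) (ρ ρ' ρ'' : ℝ → ℝ), a' ≤ a → b ≤ b' →
      (∀ θ ∈ Set.Ioo a b, ρ θ = r θ) → SolOn ρ ρ' ρ'' a' b' → a' = a ∧ b' = b

open Set Filter

/-- Symmetry of a solution about a critical point, on the overlap of `(a,b)` with its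
reflection. -/
lemma symmOn (a b : ℝ) (r r' r'' : ℝ → ℝ) (hsol : SolOn r r' r'' a b)
    (θ₀ : ℝ) (hθ₀ : θ₀ ∈ Set.Ioo a b) (hcrit : r' θ₀ = 0) :
    ∀ θ ∈ Set.Ioo (max a (2*θ₀-b)) (min b (2*θ₀-a)),
      r θ = r (2*θ₀-θ) ∧ r' θ = -r' (2*θ₀-θ) := by
  set J : Set ℝ := Set.Ioo (max a (2*θ₀-b)) (min b (2*θ₀-a)) with hJ
  set W : ℝ×ℝ → ℝ×ℝ := fun p => (p.2, p.1 + 2*p.2^2/p.1 + p.1^3 + p.1*p.2^2) with hWdef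
  set y : ℝ → ℝ×ℝ := fun θ => (r θ, r' θ) with hy
  set z : ℝ → ℝ×ℝ := fun θ => (r (2*θ₀-θ), -r' (2*θ₀-θ)) with hz
  have hJsub : ∀ θ ∈ J, θ ∈ Set.Ioo a b ∧ (2*θ₀-θ) ∈ Set.Ioo a b := by
    intro θ hθ
    obtain ⟨h1, h2⟩ := hθ
    have ha1 : a < θ := lt_of_le_of_lt (le_max_left _ _) h1
    have ha2 : 2*θ₀-b < θ := lt_of_le_of_lt (le_max_right _ _) h1
    have hb1 : θ < b := lt_of_lt_of_le h2 (min_le_left _ _)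
    have hb2 : θ < 2*θ₀-a := lt_of_lt_of_le h2 (min_le_right _ _)
    exact ⟨⟨ha1, hb1⟩, ⟨by linarith, by linarith⟩⟩
  have hr'' : ∀ θ ∈ Set.Ioo a b,
      r'' θ = r θ + 2*(r' θ)^2/(r θ) + (r θ)^3 + (r θ)*(r' θ)^2 := by
    intro θ hθ
    obtain ⟨hpos, _, _, heq⟩ := hsol θ hθ
    have hne : r θ ≠ 0 := ne_of_gt hpos
    field_simp
    linear_combination heq
  have hWy : ∀ θ ∈ Set.Ioo a b, HasDerivAt y (W (y θ)) θ := by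
    intro θ hθ
    obtain ⟨hpos, h1, h2, _⟩ := hsol θ hθ
    have hWval : W (y θ) = (r' θ, r'' θ) := by
      refine Prod.ext rfl ?_
      show r θ + 2*(r' θ)^2/(r θ) + (r θ)^3 + (r θ)*(r' θ)^2 = r'' θ
      rw [hr'' θ hθ]
    rw [hWval]
    exact h1.prodMk h2
  have hc : ∀ θ : ℝ, HasDerivAt (fun σ : ℝ => 2*θ₀ - σ) (-1) θ := by
    intro θ
    simpa using (hasDerivAt_id θ).const_sub (2*θ₀)
  have hWz : ∀ θ ∈ J, HasDerivAt z (W (z θ)) θ := by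
    intro θ hθ
    obtain ⟨_, hσ⟩ := hJsub θ hθ
    obtain ⟨hpos, h1, h2, _⟩ := hsol _ hσ
    have d1 : HasDerivAt (fun σ => r (2*θ₀-σ)) (-r' (2*θ₀-θ)) θ := by
      have := HasDerivAt.comp θ h1 (hc θ)
      simpa [Function.comp_def] using this
    have d2 : HasDerivAt (fun σ => -r' (2*θ₀-σ)) (r'' (2*θ₀-θ)) θ := by
      have := (HasDerivAt.comp θ h2 (hc θ)).neg
      simpa [Function.comp_def, Pi.neg_def] using this
    have hWval : W (z θ) = (-r' (2*θ₀-θ), r'' (2*θ₀-θ)) := by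
      refine Prod.ext rfl ?_
      show r (2*θ₀-θ) + 2*(-r' (2*θ₀-θ))^2/(r (2*θ₀-θ)) + (r (2*θ₀-θ))^3
          + (r (2*θ₀-θ))*(-r' (2*θ₀-θ))^2 = r'' (2*θ₀-θ)
      rw [hr'' _ hσ]; ring
    rw [hWval]
    exact d1.prodMk d2
  have hWsmooth : ∀ p : ℝ×ℝ, p.1 ≠ 0 → ContDiffAt ℝ 1 W p := by
    intro p hp
    apply ContDiffAt.prodMk
    · exact contDiffAt_snd
    · exact ((contDiffAt_fst.add ((contDiffAt_const.mul (contDiffAt_snd.pow 2)).div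
        contDiffAt_fst hp)).add (contDiffAt_fst.pow 3)).add
        (contDiffAt_fst.mul (contDiffAt_snd.pow 2))
  have hJopen : IsOpen J := isOpen_Ioo
  have hyc : ∀ θ ∈ Set.Ioo a b, ContinuousAt y θ := by
    intro θ hθ
    exact ((hsol θ hθ).2.1.continuousAt).prodMk ((hsol θ hθ).2.2.1.continuousAt)
  have hzc : ∀ θ ∈ J, ContinuousAt z θ := fun θ hθ => (hWz θ hθ).continuousAt
  -- local uniqueness
  have key : ∀ θ₁ ∈ J, y θ₁ = z θ₁ → y =ᶠ[nhds θ₁] z := by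
    intro θ₁ h1 heq
    have hpos : (y θ₁).1 ≠ 0 := ne_of_gt (hsol θ₁ (hJsub θ₁ h1).1).1
    obtain ⟨K, t, ht, hlip⟩ := (hWsmooth (y θ₁) hpos).exists_lipschitzOnWith
    have hJn : ∀ᶠ θ in nhds θ₁, θ ∈ J := hJopen.mem_nhds h1
    have hyt : ∀ᶠ θ in nhds θ₁, y θ ∈ t := (hyc θ₁ (hJsub θ₁ h1).1).eventually_mem ht
    have hzt : ∀ᶠ θ in nhds θ₁, z θ ∈ t := (hzc θ₁ h1).eventually_mem (heq ▸ ht)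
    refine ODE_solution_unique_of_eventually (v := fun _ => W) (s := fun _ => t)
      (Eventually.of_forall fun _ => hlip) ?_ ?_ heq
    · filter_upwards [hJn, hyt] with θ hθ hty
      exact ⟨hWy θ (hJsub θ hθ).1, hty⟩
    · filter_upwards [hJn, hzt] with θ hθ htz
      exact ⟨hWz θ hθ, htz⟩
  -- connectedness
  have hθ₀J : θ₀ ∈ J := by
    obtain ⟨h1, h2⟩ := hθ₀
    exact ⟨max_lt h1 (by linarith), lt_min h2 (by linarith)⟩
  have hθ₀eq : y θ₀ = z θ₀ := by
    show (r θ₀, r' θ₀) = (r (2*θ₀-θ₀), -r' (2*θ₀-θ₀))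
    have h : 2*θ₀-θ₀ = θ₀ := by ring
    rw [h, hcrit, neg_zero]
  have hyz : ∀ θ ∈ J, y θ = z θ := by
    intro θ hθ
    by_contra hne
    set U : Set ℝ := {σ | y =ᶠ[nhds σ] z} with hU
    set V : Set ℝ := {σ | ∀ᶠ τ in nhds σ, τ ∈ J ∧ y τ ≠ z τ} with hV
    have hUopen : IsOpen U := isOpen_setOf_eventually_nhds
    have hVopen : IsOpen V := isOpen_setOf_eventually_nhds
    have hJUV : J ⊆ U ∪ V := by
      intro σ hσ
      by_cases h : y σ = z σ
      · exact Or.inl (key σ hσ h)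
      · refine Or.inr ?_
        have hne' : y σ - z σ ≠ 0 := sub_ne_zero.mpr h
        have hcont : ContinuousAt (fun τ => y τ - z τ) σ :=
          (hyc σ (hJsub σ hσ).1).sub (hzc σ hσ)
        filter_upwards [hJopen.mem_nhds hσ, hcont.eventually_ne hne'] with τ h1 h2
        exact ⟨h1, sub_ne_zero.mp h2⟩
    have hne2 : (J ∩ V).Nonempty := by
      refine ⟨θ, hθ, ?_⟩
      have hcont : ContinuousAt (fun τ => y τ - z τ) θ :=
        (hyc θ (hJsub θ hθ).1).sub (hzc θ hθ)
      filter_upwards [hJopen.mem_nhds hθ, hcont.eventually_ne (sub_ne_zero.mpr hne)]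
        with τ h1 h2
      exact ⟨h1, sub_ne_zero.mp h2⟩
    obtain ⟨σ, _, hσU, hσV⟩ := isPreconnected_Ioo U V hUopen hVopen hJUV
      ⟨θ₀, hθ₀J, key θ₀ hθ₀J hθ₀eq⟩ hne2
    exact (hσV.self_of_nhds).2 (hσU.self_of_nhds)
  intro θ hθ
  have := hyz θ hθ
  have h1 : r θ = r (2*θ₀-θ) := congrArg Prod.fst this
  have h2 : r' θ = -r' (2*θ₀-θ) := congrArg Prod.snd this
  exact ⟨h1, h2⟩

/-- If a maximal positive solution of the ODE on `(a,b)` has a critical point at `θ₀`,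
then `r` is symmetric about `θ₀` and consequently `θ₀ = (a+b)/2`. -/
theorem stmt10 (a b : ℝ) (hab : a < b) (r r' r'' : ℝ → ℝ)
    (hmax : MaximalSolOn r r' r'' a b)
    (θ₀ : ℝ) (hθ₀ : θ₀ ∈ Set.Ioo a b) (hcrit : r' θ₀ = 0) :
    (∀ η : ℝ, θ₀ + η ∈ Set.Ioo a b →
        θ₀ - η ∈ Set.Ioo a b ∧ r (θ₀ + η) = r (θ₀ - η)) ∧
      θ₀ = (a + b) / 2 := by
  obtain ⟨hsol, hmaximal⟩ := hmax
  have hsym := symmOn a b r r' r'' hsol θ₀ hθ₀ hcrit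
  obtain ⟨ha0, hb0⟩ := hθ₀
  set ρ : ℝ → ℝ := fun θ => if θ ∈ Set.Ioo a b then r θ else r (2*θ₀-θ) with hρ
  set ρ' : ℝ → ℝ := fun θ => if θ ∈ Set.Ioo a b then r' θ else -r' (2*θ₀-θ) with hρ'
  set ρ'' : ℝ → ℝ := fun θ => if θ ∈ Set.Ioo a b then r'' θ else r'' (2*θ₀-θ) with hρ''
  have hc : ∀ θ : ℝ, HasDerivAt (fun σ : ℝ => 2*θ₀ - σ) (-1) θ := by
    intro θ
    simpa using (hasDerivAt_id θ).const_sub (2*θ₀)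
  have hsolρ : SolOn ρ ρ' ρ'' (min a (2*θ₀-b)) (max b (2*θ₀-a)) := by
    intro θ hθ
    by_cases hmem : θ ∈ Set.Ioo a b
    · have hevr : ρ =ᶠ[nhds θ] r :=
        eventually_of_mem (isOpen_Ioo.mem_nhds hmem) (fun σ hσ => if_pos hσ)
      have hevr' : ρ' =ᶠ[nhds θ] r' :=
        eventually_of_mem (isOpen_Ioo.mem_nhds hmem) (fun σ hσ => if_pos hσ)
      obtain ⟨hpos, h1, h2, heq⟩ := hsol θ hmem
      have e0 : ρ θ = r θ := if_pos hmem
      have e1 : ρ' θ = r' θ := if_pos hmem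
      have e2 : ρ'' θ = r'' θ := if_pos hmem
      refine ⟨e0 ▸ hpos, ?_, ?_, ?_⟩
      · rw [e1]; exact h1.congr_of_eventuallyEq hevr
      · rw [e2]; exact h2.congr_of_eventuallyEq hevr'
      · rw [e0, e1, e2]; exact heq
    · -- θ outside (a,b)
      have hNmem : θ ∈ Set.Ioo (2*θ₀-b) (2*θ₀-a) := by
        rcases not_and_or.mp (fun h => hmem ⟨h.1, h.2⟩) with h | h
        · push_neg at h
          have hle : θ ≤ a := h
          rcases min_lt_iff.mp hθ.1 with h' | h'
          · exact absurd h' (not_lt.mpr hle)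
          · exact ⟨h', by linarith⟩
        · push_neg at h
          have hge : b ≤ θ := h
          rcases lt_max_iff.mp hθ.2 with h' | h'
          · exact absurd h' (not_lt.mpr hge)
          · exact ⟨by linarith, h'⟩
      have hσ : 2*θ₀-θ ∈ Set.Ioo a b := by
        obtain ⟨h1, h2⟩ := hNmem
        exact ⟨by linarith, by linarith⟩
      have hevr : ρ =ᶠ[nhds θ] (fun σ => r (2*θ₀-σ)) := by
        filter_upwards [isOpen_Ioo.mem_nhds hNmem] with σ hσN
        by_cases h : σ ∈ Set.Ioo a b
        · rw [hρ]; simp only [if_pos h]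
          exact (hsym σ ⟨max_lt h.1 hσN.1, lt_min h.2 hσN.2⟩).1
        · rw [hρ]; simp only [if_neg h]
      have hevr' : ρ' =ᶠ[nhds θ] (fun σ => -r' (2*θ₀-σ)) := by
        filter_upwards [isOpen_Ioo.mem_nhds hNmem] with σ hσN
        by_cases h : σ ∈ Set.Ioo a b
        · rw [hρ']; simp only [if_pos h]
          exact (hsym σ ⟨max_lt h.1 hσN.1, lt_min h.2 hσN.2⟩).2
        · rw [hρ']; simp only [if_neg h]
      obtain ⟨hpos, h1, h2, heq⟩ := hsol _ hσ
      have d1 : HasDerivAt (fun σ => r (2*θ₀-σ)) (-r' (2*θ₀-θ)) θ := by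
        have := HasDerivAt.comp θ h1 (hc θ)
        simpa [Function.comp_def] using this
      have d2 : HasDerivAt (fun σ => -r' (2*θ₀-σ)) (r'' (2*θ₀-θ)) θ := by
        have := (HasDerivAt.comp θ h2 (hc θ)).neg
        simpa [Function.comp_def, Pi.neg_def] using this
      have e0 : ρ θ = r (2*θ₀-θ) := if_neg hmem
      have e1 : ρ' θ = -r' (2*θ₀-θ) := if_neg hmem
      have e2 : ρ'' θ = r'' (2*θ₀-θ) := if_neg hmem
      refine ⟨e0 ▸ hpos, ?_, ?_, ?_⟩
      · rw [e1]; exact d1.congr_of_eventuallyEq hevr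
      · rw [e2]; exact d2.congr_of_eventuallyEq hevr'
      · rw [e0, e1, e2]; linear_combination heq
  obtain ⟨hA, hB⟩ := hmaximal (min a (2*θ₀-b)) (max b (2*θ₀-a)) ρ ρ' ρ''
    (min_le_left _ _) (le_max_left _ _) (fun θ hθ => if_pos hθ) hsolρ
  have h1 : a ≤ 2*θ₀-b := min_eq_left_iff.mp hA
  have h2 : 2*θ₀-a ≤ b := max_eq_left_iff.mp hB
  have hmid : θ₀ = (a + b) / 2 := by linarith
  refine ⟨?_, hmid⟩
  intro η hη
  obtain ⟨hη1, hη2⟩ := hη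
  refine ⟨⟨by linarith, by linarith⟩, ?_⟩
  have hJmem : θ₀ + η ∈ Set.Ioo (max a (2*θ₀-b)) (min b (2*θ₀-a)) :=
    ⟨max_lt hη1 (by linarith), lt_min hη2 (by linarith)⟩
  have := (hsym _ hJmem).1
  have harg : 2*θ₀-(θ₀+η) = θ₀-η := by ring
  rwa [harg] at this
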